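/- Let D² be a symmetric positive definite p*×p* block matrix with blocks D²_θθ = D₀², off-diagonal A₀, and D²_ηη = H₀², and suppose ‖D₀⁻¹ A₀ H₀⁻² A₀ᵀ D₀⁻¹‖_op ≤ ν < 1. Then the efficient Fisher information D̆₀² := D₀² - A₀H₀⁻²A₀ᵀ is positive definite and satisfies (1-ν)D₀² ≤ D̆₀² ≤ D₀². -/

import Mathlib

open Matrix

/-- If the full Fisher information block matrix is positive definite and the angle condition
`‖D₀⁻¹A₀H₀⁻²A₀ᵀD₀⁻¹‖_op ≤ ν < 1` holds, then the efficient Fisher information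
`D̆₀² = D₀² - A₀H₀⁻²A₀ᵀ` is positive definite and `(1-ν)D₀² ≤ D̆₀² ≤ D₀²` in the Loewner order. -/
theorem efficient_fisher_posdef (p q : ℕ)
    (D0sq : Matrix (Fin p) (Fin p) ℝ) (A0 : Matrix (Fin p) (Fin q) ℝ)
    (H0sq : Matrix (Fin q) (Fin q) ℝ)
    (D0 : Matrix (Fin p) (Fin p) ℝ) (hD0symm : D0.IsSymm) (hD0pos : D0.PosDef)
    (hD0sq : D0 * D0 = D0sq) (hH : H0sq.PosDef)
    (hfull : (Matrix.fromBlocks D0sq A0 A0ᵀ H0sq).PosDef)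
    (ν : ℝ) (hν : ν < 1)
    (hop : ∀ v : Fin p → ℝ,
      Real.sqrt (∑ i, ((D0⁻¹ * A0 * H0sq⁻¹ * A0ᵀ * D0⁻¹).mulVec v) i ^ 2) ≤
        ν * Real.sqrt (∑ i, v i ^ 2)) :
    (D0sq - A0 * H0sq⁻¹ * A0ᵀ).PosDef ∧
    ((D0sq - A0 * H0sq⁻¹ * A0ᵀ) - (1 - ν) • D0sq).PosSemidef ∧
    (D0sq - (D0sq - A0 * H0sq⁻¹ * A0ᵀ)).PosSemidef := by
  set M : Matrix (Fin p) (Fin p) ℝ := A0 * H0sq⁻¹ * A0ᵀ with hM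
  have hD0unit : IsUnit D0 := hD0pos.isUnit
  have hD0det : IsUnit D0.det := (isUnit_iff_isUnit_det _).1 hD0unit
  have hinvmul : D0⁻¹ * D0 = 1 := nonsing_inv_mul D0 hD0det
  have hinvT : (D0⁻¹)ᵀ = D0⁻¹ := by
    rw [transpose_nonsing_inv, hD0symm]
  -- Quadratic form of D0sq
  have key1 : ∀ x : Fin p → ℝ, x ⬝ᵥ D0sq *ᵥ x = (D0 *ᵥ x) ⬝ᵥ (D0 *ᵥ x) := by
    intro x
    rw [← hD0sq, ← mulVec_mulVec, dotProduct_mulVec, ← mulVec_transpose, hD0symm]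
  -- Quadratic form of M
  have hBD : (D0⁻¹ * A0 * H0sq⁻¹ * A0ᵀ * D0⁻¹) * D0 = D0⁻¹ * M := by
    rw [Matrix.mul_assoc (D0⁻¹ * A0 * H0sq⁻¹ * A0ᵀ) D0⁻¹ D0, hinvmul, Matrix.mul_one, hM]
    simp only [Matrix.mul_assoc]
  have key2 : ∀ x : Fin p → ℝ,
      x ⬝ᵥ M *ᵥ x = (D0 *ᵥ x) ⬝ᵥ ((D0⁻¹ * A0 * H0sq⁻¹ * A0ᵀ * D0⁻¹) *ᵥ (D0 *ᵥ x)) := by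
    intro x
    calc x ⬝ᵥ M *ᵥ x
        = (D0⁻¹ *ᵥ (D0 *ᵥ x)) ⬝ᵥ M *ᵥ x := by
          rw [mulVec_mulVec, hinvmul, one_mulVec]
      _ = ((D0⁻¹)ᵀ *ᵥ (D0 *ᵥ x)) ⬝ᵥ M *ᵥ x := by rw [hinvT]
      _ = (D0 *ᵥ x) ⬝ᵥ (D0⁻¹ *ᵥ (M *ᵥ x)) := by
          rw [mulVec_transpose, ← dotProduct_mulVec]
      _ = (D0 *ᵥ x) ⬝ᵥ ((D0⁻¹ * M) *ᵥ x) := by rw [mulVec_mulVec]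
      _ = (D0 *ᵥ x) ⬝ᵥ ((D0⁻¹ * A0 * H0sq⁻¹ * A0ᵀ * D0⁻¹) *ᵥ (D0 *ᵥ x)) := by
          rw [mulVec_mulVec, hBD]
  -- The key inequality
  have keyM : ∀ x : Fin p → ℝ, x ⬝ᵥ M *ᵥ x ≤ ν * (x ⬝ᵥ D0sq *ᵥ x) := by
    intro x
    rw [key1, key2]
    set w : Fin p → ℝ := D0 *ᵥ x with hw
    set u : Fin p → ℝ := (D0⁻¹ * A0 * H0sq⁻¹ * A0ᵀ * D0⁻¹) *ᵥ w with hu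
    have hww : w ⬝ᵥ w = ∑ i, w i ^ 2 := by
      simp [dotProduct, sq]
    have hwunn : (0:ℝ) ≤ ∑ i, w i ^ 2 := Finset.sum_nonneg fun i _ => sq_nonneg _
    have huunn : (0:ℝ) ≤ ∑ i, u i ^ 2 := Finset.sum_nonneg fun i _ => sq_nonneg _
    have hcs : (w ⬝ᵥ u) ^ 2 ≤ (∑ i, u i ^ 2) * (∑ i, w i ^ 2) := by
      have := Finset.sum_mul_sq_le_sq_mul_sq Finset.univ u w
      simpa [dotProduct, mul_comm] using this
    have h1 : w ⬝ᵥ u ≤ Real.sqrt (∑ i, u i ^ 2) * Real.sqrt (∑ i, w i ^ 2) := by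
      calc w ⬝ᵥ u ≤ |w ⬝ᵥ u| := le_abs_self _
        _ = Real.sqrt ((w ⬝ᵥ u) ^ 2) := (Real.sqrt_sq_eq_abs _).symm
        _ ≤ Real.sqrt ((∑ i, u i ^ 2) * (∑ i, w i ^ 2)) := Real.sqrt_le_sqrt hcs
        _ = Real.sqrt (∑ i, u i ^ 2) * Real.sqrt (∑ i, w i ^ 2) := Real.sqrt_mul huunn _
    have h2 : Real.sqrt (∑ i, u i ^ 2) ≤ ν * Real.sqrt (∑ i, w i ^ 2) := hop w
    calc w ⬝ᵥ u ≤ Real.sqrt (∑ i, u i ^ 2) * Real.sqrt (∑ i, w i ^ 2) := h1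
      _ ≤ (ν * Real.sqrt (∑ i, w i ^ 2)) * Real.sqrt (∑ i, w i ^ 2) :=
          mul_le_mul_of_nonneg_right h2 (Real.sqrt_nonneg _)
      _ = ν * (Real.sqrt (∑ i, w i ^ 2) * Real.sqrt (∑ i, w i ^ 2)) := by ring
      _ = ν * (∑ i, w i ^ 2) := by rw [Real.mul_self_sqrt hwunn]
      _ = ν * (w ⬝ᵥ w) := by rw [hww]
  -- Hermitian facts
  have hD0sqher : D0sq.IsHermitian := by
    rw [← hD0sq]
    show (D0 * D0)ᴴ = D0 * D0
    rw [conjTranspose_mul, hD0pos.isHermitian.eq]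
  have hMpsd : M.PosSemidef := by
    have := (hH.posSemidef.inv).mul_mul_conjTranspose_same A0
    rwa [conjTranspose_eq_transpose_of_trivial] at this
  have hMher : M.IsHermitian := hMpsd.1
  -- D0sq is positive definite
  have hD0sqpos : D0sq.PosDef := by
    refine PosDef.of_dotProduct_mulVec_pos hD0sqher fun x hx => ?_
    have hxw : D0 *ᵥ x ≠ 0 := by
      intro h
      apply hx
      have hxx : D0⁻¹ *ᵥ (D0 *ᵥ x) = x := by rw [mulVec_mulVec, hinvmul, one_mulVec]
      rw [h, mulVec_zero] at hxx
      exact hxx.symm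
    have hpos : (0:ℝ) < (D0 *ᵥ x) ⬝ᵥ (D0 *ᵥ x) := by
      have hnn : (0:ℝ) ≤ (D0 *ᵥ x) ⬝ᵥ (D0 *ᵥ x) :=
        Finset.sum_nonneg fun i _ => mul_self_nonneg ((D0 *ᵥ x) i)
      rcases hnn.lt_or_eq with h | h
      · exact h
      · exact absurd (dotProduct_self_eq_zero.1 h.symm) hxw
    simpa [star_trivial, key1 x] using hpos
  refine ⟨?_, ?_, ?_⟩
  · refine PosDef.of_dotProduct_mulVec_pos (hD0sqher.sub hMher) fun x hx => ?_
    have h1 := keyM x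
    have h2 : 0 < x ⬝ᵥ D0sq *ᵥ x := by simpa [star_trivial] using hD0sqpos.dotProduct_mulVec_pos hx
    have : x ⬝ᵥ (D0sq - M) *ᵥ x = x ⬝ᵥ D0sq *ᵥ x - x ⬝ᵥ M *ᵥ x := by
      rw [sub_mulVec, dotProduct_sub]
    simp only [star_trivial, this]
    nlinarith
  · have hsm : ((1 - ν) • D0sq).IsHermitian := by
      show ((1 - ν) • D0sq)ᴴ = (1 - ν) • D0sq
      rw [conjTranspose_smul, star_trivial, hD0sqher.eq]
    refine PosSemidef.of_dotProduct_mulVec_nonneg ((hD0sqher.sub hMher).sub hsm) fun x => ?_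
    have h1 := keyM x
    have : ((D0sq - M) - (1 - ν) • D0sq) *ᵥ x =
        (D0sq *ᵥ x - M *ᵥ x) - (1 - ν) • (D0sq *ᵥ x) := by
      rw [sub_mulVec, sub_mulVec, smul_mulVec]
    simp only [star_trivial, this, dotProduct_sub, dotProduct_smul, smul_eq_mul]
    nlinarith
  · rw [sub_sub_cancel]
    exact hMpsd
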